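/- Fix a sequence of jobs π over a finite set M with release times R_j, process-time function P_j(·) ≥ 0, an initial blocking time P_max ≥ 0, and finitely many idle-time intervals (R̄_γ, P̄_γ). Define the greedy schedule by T_{π_1} = max(R_{π_1}, P_max), T_{π_i} = max(R_{π_i}, T_{π_{i−1}} + P_{π_{i−1}}(T_{π_{i−1}})) for i ≥ 2, and whenever T_{π_i} ∈ [R̄_γ, ∞) with T_{π_i} < P̄_γ or T_{π_i} + P_{π_i}(T_{π_i}) > R̄_γ with T_{π_i} < R̄_γ, delay T_{π_i} to P̄_γ (processing idle-times in increasing order of R̄_γ). Assume P_j is nondecreasing composed with T (i.e., t ↦ t + P_j(t) is nondecreasing). Then the resulting schedule satisfies: T_{π_i} ≥ R_{π_i}, the intervals (T_{π_i}, T_{π_i} + P_{π_i}(T_{π_i})) are pairwise disjoint, and each such interval is disjoint from every idle-time (R̄_γ, P̄_γ). -/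

import Mathlib

/-- One delaying step of the greedy IIT schedule for a single idle-time
`(p.1, p.2) = (R̄, P̄)`: if the candidate start time `s` lies at or past `R̄`,
delay it to at least `P̄`; otherwise, if the occupancy `(s, s + Pr s)` would
overlap the idle-time, delay the start to `P̄`. -/
noncomputable def idleStep (Pr : ℝ → ℝ) (s : ℝ) (p : ℝ × ℝ) : ℝ :=
  if p.1 ≤ s then max s p.2
  else if p.1 < s + Pr s then p.2
  else s

/-- Delay a candidate start time past all idle-times, processed in the given
(list) order. -/
noncomputable def idleAdjust (Pr : ℝ → ℝ) (idles : List (ℝ × ℝ)) (s : ℝ) : ℝ :=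
  idles.foldl (idleStep Pr) s

/-- The interval `(s, s + Pr s)` avoids the idle-time `p`, in a strengthened
form that is preserved by later `idleStep`s with larger left endpoints. -/
def Avoids (Pr : ℝ → ℝ) (p : ℝ × ℝ) (s : ℝ) : Prop :=
  p.2 ≤ s ∨ (s + Pr s ≤ p.1 ∧ s < p.1)

lemma le_idleStep (Pr : ℝ → ℝ) (s : ℝ) (p : ℝ × ℝ) (hp : p.1 ≤ p.2) :
    s ≤ idleStep Pr s p := by
  unfold idleStep
  split_ifs with h1 h2
  · exact le_max_left _ _
  · exact le_of_lt (lt_of_lt_of_le (lt_of_not_ge h1) hp)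
  · exact le_rfl

lemma avoids_idleStep_self (Pr : ℝ → ℝ) (s : ℝ) (p : ℝ × ℝ) :
    Avoids Pr p (idleStep Pr s p) := by
  unfold idleStep Avoids
  split_ifs with h1 h2
  · exact Or.inl (le_max_right _ _)
  · exact Or.inl le_rfl
  · exact Or.inr ⟨le_of_not_gt h2, lt_of_not_ge h1⟩

lemma avoids_idleStep (Pr : ℝ → ℝ) (s : ℝ) (p q : ℝ × ℝ)
    (hq : q.1 ≤ q.2) (hpq : p.1 ≤ q.1) (h : Avoids Pr p s) :
    Avoids Pr p (idleStep Pr s q) := by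
  rcases h with h | ⟨h1, h2⟩
  · exact Or.inl (h.trans (le_idleStep Pr s q hq))
  · have he : idleStep Pr s q = s := by
      unfold idleStep
      split_ifs with a b
      · exact absurd (lt_of_lt_of_le h2 hpq) (not_lt_of_ge a)
      · exact absurd (lt_of_lt_of_le b (h1.trans hpq)) (lt_irrefl _)
      · rfl
    rw [he]; exact Or.inr ⟨h1, h2⟩

lemma le_foldl_idleStep (Pr : ℝ → ℝ) (L : List (ℝ × ℝ))
    (hL : ∀ q ∈ L, q.1 ≤ q.2) (s : ℝ) :
    s ≤ List.foldl (idleStep Pr) s L := by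
  induction L generalizing s with
  | nil => exact le_rfl
  | cons q L ih =>
    exact (le_idleStep Pr s q (hL q (List.mem_cons_self))).trans
      (ih (fun r hr => hL r (List.mem_cons_of_mem _ hr)) _)

lemma avoids_foldl (Pr : ℝ → ℝ) (p : ℝ × ℝ) (L : List (ℝ × ℝ))
    (hL : ∀ q ∈ L, q.1 ≤ q.2) (hpL : ∀ q ∈ L, p.1 ≤ q.1) (s : ℝ)
    (h : Avoids Pr p s) : Avoids Pr p (List.foldl (idleStep Pr) s L) := by
  induction L generalizing s with
  | nil => exact h
  | cons q L ih =>
    exact ih (fun r hr => hL r (List.mem_cons_of_mem _ hr))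
      (fun r hr => hpL r (List.mem_cons_of_mem _ hr)) _
      (avoids_idleStep Pr s p q (hL q (List.mem_cons_self))
        (hpL q (List.mem_cons_self)) h)

lemma avoids_idleAdjust (Pr : ℝ → ℝ) (L : List (ℝ × ℝ))
    (hL : ∀ q ∈ L, q.1 ≤ q.2) (hs : L.Pairwise (fun a b => a.1 ≤ b.1))
    (s : ℝ) : ∀ p ∈ L, Avoids Pr p (idleAdjust Pr L s) := by
  induction L generalizing s with
  | nil => intro p hp; cases hp
  | cons q L ih =>
    intro p hp
    have hL' : ∀ r ∈ L, r.1 ≤ r.2 := fun r hr => hL r (List.mem_cons_of_mem _ hr)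
    rcases List.mem_cons.mp hp with rfl | hp
    · exact avoids_foldl Pr p L hL'
        (fun r hr => (List.pairwise_cons.mp hs).1 r hr) _
        (avoids_idleStep_self Pr s p)
    · exact ih hL' (List.pairwise_cons.mp hs).2 _ p hp

lemma avoids_inter_empty (Pr : ℝ → ℝ) (p : ℝ × ℝ) (s : ℝ)
    (h : Avoids Pr p s) :
    Set.Ioo s (s + Pr s) ∩ Set.Ioo p.1 p.2 = ∅ := by
  ext x
  simp only [Set.mem_inter_iff, Set.mem_Ioo, Set.mem_empty_iff_false, iff_false,
    not_and, and_imp]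
  intro a b c d
  rcases h with h | ⟨h1, h2⟩ <;> linarith

theorem greedy_iit_schedule_correct {n m : ℕ}
    (R : Fin n → ℝ) (Pr : Fin n → ℝ → ℝ) (Pmax : ℝ)
    (idle : Fin m → ℝ × ℝ)
    (hPmax : 0 ≤ Pmax)
    (hPr : ∀ j t, 0 ≤ Pr j t)
    (hmono : ∀ j, Monotone (fun t => t + Pr j t))
    (hidle : ∀ γ : Fin m, (idle γ).1 ≤ (idle γ).2)
    (hsorted : ∀ γ γ' : Fin m, γ ≤ γ' → (idle γ).1 ≤ (idle γ').1)
    (T : Fin n → ℝ)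
    (hT0 : ∀ h : 0 < n,
      T ⟨0, h⟩ = idleAdjust (Pr ⟨0, h⟩) (List.ofFn idle) (max (R ⟨0, h⟩) Pmax))
    (hTsucc : ∀ i : ℕ, ∀ h : i + 1 < n,
      T ⟨i + 1, h⟩ = idleAdjust (Pr ⟨i + 1, h⟩) (List.ofFn idle)
        (max (R ⟨i + 1, h⟩)
          (T ⟨i, Nat.lt_of_succ_lt h⟩ +
            Pr ⟨i, Nat.lt_of_succ_lt h⟩ (T ⟨i, Nat.lt_of_succ_lt h⟩)))) :
    (∀ i, R i ≤ T i) ∧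
    (∀ i j, i ≠ j →
      Set.Ioo (T i) (T i + Pr i (T i)) ∩ Set.Ioo (T j) (T j + Pr j (T j)) = ∅) ∧
    (∀ i, ∀ γ : Fin m,
      Set.Ioo (T i) (T i + Pr i (T i)) ∩ Set.Ioo (idle γ).1 (idle γ).2 = ∅) := by
  have hL : ∀ q ∈ List.ofFn idle, q.1 ≤ q.2 := by
    intro q hq
    obtain ⟨γ, rfl⟩ := List.mem_ofFn.mp hq
    exact hidle γ
  have hPw : (List.ofFn idle).Pairwise (fun a b => a.1 ≤ b.1) := by
    rw [List.pairwise_ofFn]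
    intro γ γ' h
    exact hsorted γ γ' h.le
  -- every T i is an idleAdjust of a start time at least R i
  have hform : ∀ i : Fin n, ∃ s, R i ≤ s ∧
      T i = idleAdjust (Pr i) (List.ofFn idle) s := by
    rintro ⟨k, hk⟩
    cases k with
    | zero => exact ⟨max (R ⟨0, hk⟩) Pmax, le_max_left _ _, hT0 hk⟩
    | succ k =>
      exact ⟨_, le_max_left _ _, hTsucc k hk⟩
  have hRT : ∀ i, R i ≤ T i := by
    intro i
    obtain ⟨s, hs, he⟩ := hform i
    rw [he]
    exact hs.trans (le_foldl_idleStep _ _ hL _)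
  have hchain : ∀ k : ℕ, ∀ hk : k + 1 < n,
      T ⟨k, Nat.lt_of_succ_lt hk⟩ +
        Pr ⟨k, Nat.lt_of_succ_lt hk⟩ (T ⟨k, Nat.lt_of_succ_lt hk⟩) ≤
      T ⟨k + 1, hk⟩ := by
    intro k hk
    rw [hTsucc k hk]
    exact (le_max_right _ _).trans (le_foldl_idleStep _ _ hL _)
  have hlt : ∀ l : ℕ, ∀ hl : l < n, ∀ k : ℕ, ∀ hkl : k < l,
      T ⟨k, lt_trans hkl hl⟩ + Pr ⟨k, lt_trans hkl hl⟩ (T ⟨k, lt_trans hkl hl⟩)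
        ≤ T ⟨l, hl⟩ := by
    intro l
    induction l with
    | zero => intro _ k hkl; exact absurd hkl (Nat.not_lt_zero k)
    | succ l ih =>
      intro hl k hkl
      rcases Nat.lt_succ_iff_lt_or_eq.mp hkl with h | rfl
      · calc T ⟨k, _⟩ + Pr ⟨k, _⟩ (T ⟨k, _⟩)
            ≤ T ⟨l, Nat.lt_of_succ_lt hl⟩ := ih (Nat.lt_of_succ_lt hl) k h
          _ ≤ T ⟨l, Nat.lt_of_succ_lt hl⟩ +
                Pr ⟨l, Nat.lt_of_succ_lt hl⟩ (T ⟨l, Nat.lt_of_succ_lt hl⟩) :=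
              le_add_of_nonneg_right (hPr _ _)
          _ ≤ T ⟨l + 1, hl⟩ := hchain l hl
      · exact hchain k hl
  refine ⟨hRT, ?_, ?_⟩
  · -- pairwise disjointness
    have key : ∀ i j : Fin n, i < j →
        Set.Ioo (T i) (T i + Pr i (T i)) ∩ Set.Ioo (T j) (T j + Pr j (T j)) = ∅ := by
      rintro ⟨ki, hki⟩ ⟨kj, hkj⟩ hij
      have hk : ki < kj := hij
      have hle := hlt kj hkj ki hk
      ext x
      simp only [Set.mem_inter_iff, Set.mem_Ioo, Set.mem_empty_iff_false, iff_false,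
        not_and, and_imp]
      intro a b c d
      linarith
    intro i j hij
    rcases lt_or_gt_of_ne hij with h | h
    · exact key i j h
    · rw [Set.inter_comm]; exact key j i h
  · intro i γ
    obtain ⟨s, _, he⟩ := hform i
    rw [he]
    exact avoids_inter_empty (Pr i) (idle γ) _
      (avoids_idleAdjust (Pr i) _ hL hPw s (idle γ)
        (List.mem_ofFn.mpr ⟨γ, rfl⟩))
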